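/- With T_N(A) = (1/N) ∑_{k=0}^{N-1} I^{⊗(N-1-k)} ⊗ A ⊗ I^{⊗k}, for every A ∈ Mₙ(ℂ) one has (1/2)‖A‖ ≤ ‖T_N(A)‖ ≤ ‖A‖; moreover if A is normal then ‖T_N(A)‖ = ‖A‖. In particular T_N is injective. -/

import Mathlib

set_option maxHeartbeats 1000000
set_option synthInstance.maxHeartbeats 400000

open Finset
open scoped Matrix


/-- The ℓ²→ℓ² operator norm of a square complex matrix (arbitrary finite index type). -/
noncomputable def opNorm {m : Type*} [Fintype m] [DecidableEq m] (A : Matrix m m ℂ) : ℝ :=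
  ‖Matrix.toEuclideanCLM (𝕜 := ℂ) A‖

/-- The operator `I^{⊗(N-1-k)} ⊗ A ⊗ I^{⊗k}` on `(ℂⁿ)^{⊗N}`, realized on the index set
`Fin N → Fin n`. -/
def embedAt {n N : ℕ} (k : Fin N) (A : Matrix (Fin n) (Fin n) ℂ) :
    Matrix (Fin N → Fin n) (Fin N → Fin n) ℂ :=
  Matrix.of fun x y =>
    A (x k) (y k) * ∏ j ∈ Finset.univ.erase k, (if x j = y j then (1 : ℂ) else 0)

/-- The macroscopic-observable map `T_N(A) = (1/N) ∑_{k=0}^{N-1} I^{⊗(N-1-k)} ⊗ A ⊗ I^{⊗k}`. -/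
noncomputable def T (n N : ℕ) (A : Matrix (Fin n) (Fin n) ℂ) :
    Matrix (Fin N → Fin n) (Fin N → Fin n) ℂ :=
  ((N : ℂ))⁻¹ • ∑ k : Fin N, embedAt k A


-- sum over function space of a product = product of sums
lemma sum_fun_prod {ι κ : Type*} [Fintype ι] [Fintype κ] [DecidableEq ι]
    (g : ι → κ → ℂ) : ∑ y : ι → κ, ∏ j, g j (y j) = ∏ j, ∑ c, g j c := by
  rw [Finset.prod_univ_sum]
  rw [Fintype.piFinset_univ]

example : True := trivial

open ComplexConjugate in
lemma inner_embedAt {n N : ℕ} (k : Fin N) (A : Matrix (Fin n) (Fin n) ℂ)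
    (u : Fin n → ℂ) (hu : ∑ a, conj (u a) * u a = 1) :
    ∑ x : Fin N → Fin n, ∑ y : Fin N → Fin n,
        conj (∏ j, u (x j)) * (embedAt k A x y * ∏ j, u (y j))
      = ∑ a, ∑ b, conj (u a) * (A a b * u b) := by
  classical
  set g : Fin N → Fin n × Fin n → ℂ := fun j p =>
    (if j = k then A p.1 p.2 else if p.1 = p.2 then 1 else 0) * (conj (u p.1) * u p.2) with hg
  have key : ∀ x y : Fin N → Fin n,
      conj (∏ j, u (x j)) * (embedAt k A x y * ∏ j, u (y j))
        = ∏ j, g j (x j, y j) := by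
    intro x y
    have h1 : ∏ j, g j (x j, y j)
        = (∏ j, (if j = k then A (x j) (y j) else if x j = y j then 1 else 0))
          * ∏ j, (conj (u (x j)) * u (y j)) := by
      rw [← Finset.prod_mul_distrib]
    have h2 : (∏ j, (if j = k then A (x j) (y j) else if x j = y j then 1 else 0))
        = A (x k) (y k) * ∏ j ∈ Finset.univ.erase k, (if x j = y j then (1:ℂ) else 0) := by
      rw [← Finset.mul_prod_erase Finset.univ _ (Finset.mem_univ k)]
      rw [if_pos rfl]
      congr 1
      refine Finset.prod_congr rfl fun j hj => ?_
      rw [if_neg (Finset.ne_of_mem_erase hj)]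
    rw [h1, h2, map_prod, Finset.prod_mul_distrib, embedAt]
    simp only [Matrix.of_apply]
    ring
  simp only [key]
  have := sum_fun_prod (ι := Fin N) (κ := (Fin n) × (Fin n)) g
  rw [show (∑ x : Fin N → Fin n, ∑ y : Fin N → Fin n, ∏ j, g j (x j, y j))
      = ∑ q : Fin N → Fin n × Fin n, ∏ j, g j (q j) from ?_, this]
  · rw [← Finset.mul_prod_erase Finset.univ _ (Finset.mem_univ k)]
    have hk : ∑ c : Fin n × Fin n, g k c = ∑ a, ∑ b, conj (u a) * (A a b * u b) := by
      rw [Fintype.sum_prod_type]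
      refine Finset.sum_congr rfl fun a _ => Finset.sum_congr rfl fun b _ => ?_
      simp only [hg, eq_self_iff_true, if_true]; ring
    have hne : ∀ j ∈ Finset.univ.erase k, (∑ c : Fin n × Fin n, g j c) = 1 := by
      intro j hj
      have hjk := Finset.ne_of_mem_erase hj
      rw [Fintype.sum_prod_type]
      simp only [hg, if_neg hjk, ite_mul, one_mul, zero_mul]
      simp only [Finset.sum_ite_eq, Finset.mem_univ, if_true]
      exact hu
    rw [hk, Finset.prod_congr rfl hne, Finset.prod_const_one, mul_one]
  · rw [← Equiv.sum_comp (Equiv.arrowProdEquivProdArrow (Fin N) (fun _ => Fin n) (fun _ => Fin n)).symm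
      (fun q => ∏ j, g j (q j)), Fintype.sum_prod_type]
    rfl

open ComplexConjugate in
lemma inner_T {n N : ℕ} (hN : 0 < N) (A : Matrix (Fin n) (Fin n) ℂ)
    (u : Fin n → ℂ) (hu : ∑ a, conj (u a) * u a = 1) :
    ∑ x : Fin N → Fin n,
        conj (∏ j, u (x j)) * ((T n N A).mulVec (fun y => ∏ j, u (y j)) x)
      = ∑ a, ∑ b, conj (u a) * (A a b * u b) := by
  classical
  set v : (Fin N → Fin n) → ℂ := fun y => ∏ j, u (y j) with hv
  have h1 : ∀ x, conj (v x) * ((T n N A).mulVec v x)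
      = (N:ℂ)⁻¹ * ∑ k : Fin N, ∑ y, conj (v x) * (embedAt k A x y * v y) := by
    intro x
    have e1 : (T n N A).mulVec v x = ∑ y, ((N:ℂ)⁻¹ * ∑ k : Fin N, embedAt k A x y) * v y := by
      simp [T, Matrix.mulVec, dotProduct, Matrix.smul_apply, Matrix.sum_apply]
    rw [e1]
    simp only [Finset.mul_sum, Finset.sum_mul]
    rw [Finset.sum_comm]
    exact Finset.sum_congr rfl fun k _ => Finset.sum_congr rfl fun y _ => by ring
  calc ∑ x, conj (v x) * ((T n N A).mulVec v x)
      = (N:ℂ)⁻¹ * ∑ x, ∑ k : Fin N, ∑ y, conj (v x) * (embedAt k A x y * v y) := by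
        rw [Finset.mul_sum]; exact Finset.sum_congr rfl fun x _ => h1 x
    _ = (N:ℂ)⁻¹ * ∑ k : Fin N, ∑ x, ∑ y, conj (v x) * (embedAt k A x y * v y) := by
        rw [Finset.sum_comm]
    _ = (N:ℂ)⁻¹ * ∑ k : Fin N, ∑ a, ∑ b, conj (u a) * (A a b * u b) := by
        congr 1
        exact Finset.sum_congr rfl fun k _ => inner_embedAt k A u hu
    _ = ∑ a, ∑ b, conj (u a) * (A a b * u b) := by
        rw [Finset.sum_const, Finset.card_univ, Fintype.card_fin, nsmul_eq_mul, ← mul_assoc,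
          inv_mul_cancel₀ (by exact_mod_cast hN.ne' : (N:ℂ) ≠ 0), one_mul]

open ComplexConjugate in
lemma norm_symm_eq_one {m : Type*} [Fintype m] (u : m → ℂ)
    (hu : ∑ a, conj (u a) * u a = 1) :
    ‖(WithLp.equiv 2 (m → ℂ)).symm u‖ = 1 := by
  have h2 : ∑ a, ‖u a‖^2 = 1 := by
    have : ((∑ a, ‖u a‖^2 : ℝ) : ℂ) = 1 := by
      push_cast
      rw [← hu]
      exact Finset.sum_congr rfl fun a _ => (RCLike.conj_mul (u a)).symm
    exact_mod_cast this
  rw [EuclideanSpace.norm_eq]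
  simp only [WithLp.equiv_symm_apply, WithLp.ofLp_toLp, PiLp.toLp_apply]
  rw [h2, Real.sqrt_one]

open ComplexConjugate in
lemma abs_inner_mulVec_le {m : Type*} [Fintype m] [DecidableEq m] (M : Matrix m m ℂ)
    (u : m → ℂ) (hu : ∑ a, conj (u a) * u a = 1) :
    ‖∑ a, conj (u a) * M.mulVec u a‖ ≤ opNorm M := by
  set U := (WithLp.equiv 2 (m → ℂ)).symm u with hU'
  have hU : ‖U‖ = 1 := norm_symm_eq_one u hu
  have happ : Matrix.toEuclideanCLM (𝕜 := ℂ) M U = (WithLp.equiv 2 (m → ℂ)).symm (M.mulVec u) :=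
    Matrix.toEuclideanCLM_toLp M u
  have hinner : (inner ℂ U (Matrix.toEuclideanCLM (𝕜 := ℂ) M U) : ℂ)
      = ∑ a, conj (u a) * M.mulVec u a := by
    rw [happ]
    simp [PiLp.inner_apply, RCLike.inner_apply, WithLp.equiv_symm_apply, hU']
    exact Finset.sum_congr rfl fun a _ => mul_comm _ _
  calc ‖∑ a, conj (u a) * M.mulVec u a‖
      = ‖(inner ℂ U (Matrix.toEuclideanCLM (𝕜 := ℂ) M U) : ℂ)‖ := by rw [hinner]
    _ ≤ ‖U‖ * ‖Matrix.toEuclideanCLM (𝕜 := ℂ) M U‖ := norm_inner_le_norm _ _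
    _ ≤ ‖U‖ * (‖Matrix.toEuclideanCLM (𝕜 := ℂ) M‖ * ‖U‖) := by
        gcongr
        exact (Matrix.toEuclideanCLM (𝕜 := ℂ) M).le_opNorm U
    _ = opNorm M := by rw [hU, opNorm]; ring

open ComplexConjugate in
lemma inner_double {m : Type*} [Fintype m] (M : Matrix m m ℂ) (u : m → ℂ) :
    ∑ a, conj (u a) * M.mulVec u a = ∑ a, ∑ b, conj (u a) * (M a b * u b) := by
  simp [Matrix.mulVec, dotProduct, Finset.mul_sum]

open ComplexConjugate in
lemma key_lower {n N : ℕ} (hN : 0 < N) (A : Matrix (Fin n) (Fin n) ℂ)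
    (u : Fin n → ℂ) (hu : ∑ a, conj (u a) * u a = 1) :
    ‖∑ a, ∑ b, conj (u a) * (A a b * u b)‖ ≤ opNorm (T n N A) := by
  classical
  set v : (Fin N → Fin n) → ℂ := fun y => ∏ j, u (y j) with hv
  have hvu : ∑ x, conj (v x) * v x = 1 := by
    have hx : ∀ x : Fin N → Fin n, conj (v x) * v x
        = ∏ j, (conj (u (x j)) * u (x j)) := by
      intro x; rw [hv]; simp [map_prod, Finset.prod_mul_distrib]
    simp only [hx]
    rw [sum_fun_prod (fun _ c => conj (u c) * u c)]
    simp [hu]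
  have h := abs_inner_mulVec_le (T n N A) v hvu
  rw [show ∑ x, conj (v x) * (T n N A).mulVec v x
      = ∑ a, ∑ b, conj (u a) * (A a b * u b) from inner_T hN A u hu] at h
  exact h

open ComplexConjugate in
lemma exists_unit_eigen {m : Type*} [Fintype m] [DecidableEq m] [Nonempty m]
    (M : Matrix m m ℂ) (hM : IsStarNormal M) :
    ∃ (u : m → ℂ) (z : ℂ), (∑ a, conj (u a) * u a = 1) ∧
      (∑ a, ∑ b, conj (u a) * (M a b * u b)) = z ∧ ‖z‖ = opNorm M := by
  classical
  set f := Matrix.toEuclideanCLM (𝕜 := ℂ) M with hf'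
  haveI hf : IsStarNormal f := by
    constructor
    rw [Commute, SemiconjBy, hf', ← map_star, ← map_mul, ← map_mul, hM.star_comm_self.eq]
  haveI : Nontrivial (EuclideanSpace ℂ m →L[ℂ] EuclideanSpace ℂ m) := by
    refine nontrivial_of_ne 1 0 fun h => ?_
    obtain ⟨a⟩ := ‹Nonempty m›
    have h1 : (EuclideanSpace.single a (1:ℂ)) = 0 := by
      simpa using ContinuousLinearMap.ext_iff.mp h (EuclideanSpace.single a (1:ℂ))
    have h2 : (EuclideanSpace.single a (1:ℂ)) a = 0 := by rw [h1]; rfl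
    simp [EuclideanSpace.single_apply] at h2
  obtain ⟨z, hz, hzr⟩ := spectrum.exists_nnnorm_eq_spectralRadius (a := f)
  have hznorm : ‖z‖ = opNorm M := by
    have := hf.spectralRadius_eq_nnnorm
    rw [this] at hzr
    have : ‖z‖₊ = ‖f‖₊ := by exact_mod_cast hzr
    simpa [opNorm] using congrArg NNReal.toReal this
  -- z is an eigenvalue of M
  have hzM : z ∈ spectrum ℂ M := by
    rwa [hf', AlgEquiv.spectrum_eq] at hz
  have hzE : z ∈ spectrum ℂ (Matrix.toLinAlgEquiv' M) := by
    rwa [AlgEquiv.spectrum_eq]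
  have hev : Module.End.HasEigenvalue (Matrix.toLinAlgEquiv' M) z :=
    Module.End.hasEigenvalue_iff_mem_spectrum.mpr hzE
  obtain ⟨x, hx⟩ := hev.exists_hasEigenvector
  have hx0 : x ≠ 0 := hx.right
  have hxe : M.mulVec x = z • x := by
    have := hx.apply_eq_smul
    rwa [Matrix.toLinAlgEquiv'_apply] at this
  -- normalize
  set r : ℝ := Real.sqrt (∑ a, ‖x a‖^2) with hr'
  have hrpos : 0 < r := by
    apply Real.sqrt_pos.mpr
    have : ∃ a, x a ≠ 0 := by
      by_contra hc
      push_neg at hc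
      exact hx0 (funext hc)
    obtain ⟨a, ha⟩ := this
    exact Finset.sum_pos' (fun i _ => sq_nonneg _)
      ⟨a, Finset.mem_univ a, pow_pos (norm_pos_iff.mpr ha) 2⟩
  set u : m → ℂ := fun a => (r:ℂ)⁻¹ * x a with hu'
  have hune : (r:ℂ) ≠ 0 := by exact_mod_cast hrpos.ne'
  have hu1 : ∑ a, conj (u a) * u a = 1 := by
    have hsum : ∑ a, conj (x a) * x a = ((r:ℂ))^2 := by
      have h1 : ∀ a, conj (x a) * x a = ((‖x a‖^2 : ℝ) : ℂ) := by
        intro a; rw [RCLike.conj_mul]; norm_cast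
      simp only [h1]
      rw [← Complex.ofReal_sum, show ((r:ℂ))^2 = ((r^2 : ℝ) : ℂ) by push_cast; ring]
      congr 1
      rw [hr', Real.sq_sqrt (by positivity)]
    simp only [hu', map_mul, map_inv₀, Complex.conj_ofReal]
    rw [show ∑ a, (r:ℂ)⁻¹ * conj (x a) * ((r:ℂ)⁻¹ * x a)
        = ((r:ℂ)⁻¹ * (r:ℂ)⁻¹) * ∑ a, conj (x a) * x a by
      rw [Finset.mul_sum]; exact Finset.sum_congr rfl fun a _ => by ring]
    rw [hsum]
    field_simp
  refine ⟨u, z, hu1, ?_, hznorm⟩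
  rw [← inner_double]
  have hmu : M.mulVec u = z • u := by
    rw [hu']
    have : M.mulVec (fun a => (r:ℂ)⁻¹ * x a) = (r:ℂ)⁻¹ • M.mulVec x := by
      rw [← Matrix.mulVec_smul]; rfl
    rw [this, hxe, smul_comm]
    rfl
  rw [hmu]
  simp only [Pi.smul_apply, smul_eq_mul]
  rw [show ∑ a, conj (u a) * (z * u a) = z * ∑ a, conj (u a) * u a by
    rw [Finset.mul_sum]; exact Finset.sum_congr rfl fun a _ => by ring]
  rw [hu1, mul_one]

lemma sq_mulVec_le {m : Type*} [Fintype m] [DecidableEq m] (M : Matrix m m ℂ) (w : m → ℂ) :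
    ∑ a, ‖M.mulVec w a‖^2 ≤ (opNorm M)^2 * ∑ c, ‖w c‖^2 := by
  have h := (Matrix.toEuclideanCLM (𝕜 := ℂ) M).le_opNorm ((WithLp.equiv 2 (m → ℂ)).symm w)
  rw [WithLp.equiv_symm_apply, Matrix.toEuclideanCLM_toLp, EuclideanSpace.norm_eq, EuclideanSpace.norm_eq] at h
  simp only [WithLp.ofLp_toLp, PiLp.toLp_apply] at h
  have h2 := pow_le_pow_left₀ (Real.sqrt_nonneg _) h 2
  rw [Real.sq_sqrt (by positivity), mul_pow, Real.sq_sqrt (by positivity)] at h2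
  calc ∑ a, ‖M.mulVec w a‖^2 = ∑ a, ‖Matrix.toLin' M w a‖^2 := by
        simp [Matrix.toLin'_apply]
    _ ≤ ‖Matrix.toEuclideanCLM (𝕜 := ℂ) M‖^2 * ∑ c, ‖w c‖^2 := h2
    _ = (opNorm M)^2 * ∑ c, ‖w c‖^2 := by rw [opNorm]

lemma opNorm_le_of_sq {m : Type*} [Fintype m] [DecidableEq m] (M : Matrix m m ℂ) (C : ℝ)
    (hC : 0 ≤ C) (h : ∀ w : m → ℂ, ∑ a, ‖M.mulVec w a‖^2 ≤ C^2 * ∑ c, ‖w c‖^2) :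
    opNorm M ≤ C := by
  rw [opNorm]
  refine ContinuousLinearMap.opNorm_le_bound _ hC fun V => ?_
  set w : m → ℂ := WithLp.equiv 2 (m → ℂ) V with hw
  have hV : (WithLp.equiv 2 (m → ℂ)).symm w = V := (WithLp.equiv 2 (m → ℂ)).symm_apply_apply V
  rw [← hV, WithLp.equiv_symm_apply, Matrix.toEuclideanCLM_toLp]
  rw [EuclideanSpace.norm_eq, EuclideanSpace.norm_eq]
  simp only [WithLp.ofLp_toLp, PiLp.toLp_apply]
  rw [show C * Real.sqrt (∑ c, ‖w c‖^2) = Real.sqrt (C^2 * ∑ c, ‖w c‖^2) by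
    rw [Real.sqrt_mul (sq_nonneg C), Real.sqrt_sq hC]]
  apply Real.sqrt_le_sqrt
  simpa [Matrix.toLin'_apply] using h w

lemma embed_mulVec_split {n N : ℕ} (k : Fin N) (A : Matrix (Fin n) (Fin n) ℂ)
    (v : (Fin N → Fin n) → ℂ) (a : Fin n) (r : {j : Fin N // j ≠ k} → Fin n) :
    (embedAt k A).mulVec v ((Equiv.funSplitAt k (Fin n)).symm (a, r))
      = ∑ b, A a b * v ((Equiv.funSplitAt k (Fin n)).symm (b, r)) := by
  classical
  set e := Equiv.funSplitAt k (Fin n) with he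
  have hk : ∀ (b : Fin n) (s : {j : Fin N // j ≠ k} → Fin n), e.symm (b, s) k = b := by
    intro b s; simp [he, Equiv.funSplitAt, Equiv.piSplitAt]
  have hne : ∀ (b : Fin n) (s : {j : Fin N // j ≠ k} → Fin n) (j : Fin N) (hj : j ≠ k),
      e.symm (b, s) j = s ⟨j, hj⟩ := by
    intro b s j hj; simp [he, Equiv.funSplitAt, Equiv.piSplitAt, dif_neg hj]
  show ∑ y, embedAt k A (e.symm (a, r)) y * v y = _
  rw [← Equiv.sum_comp e.symm (fun y => embedAt k A (e.symm (a, r)) y * v y),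
    Fintype.sum_prod_type]
  have hterm : ∀ (b : Fin n) (s : {j : Fin N // j ≠ k} → Fin n),
      embedAt k A (e.symm (a, r)) (e.symm (b, s))
        = A a b * (if r = s then 1 else 0) := by
    intro b s
    rw [embedAt, Matrix.of_apply, hk, hk]
    congr 1
    rw [Finset.prod_boole]
    congr 1
    simp only [eq_iff_iff]
    constructor
    · intro h
      funext j
      have hj := j.2
      have h2 := h j.1 (Finset.mem_erase.mpr ⟨hj, Finset.mem_univ _⟩)
      rw [hne a r j.1 hj, hne b s j.1 hj] at h2
      exact h2
    · intro h j hj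
      have hjk : j ≠ k := Finset.ne_of_mem_erase hj
      rw [hne a r j hjk, hne b s j hjk, h]
  simp only [hterm]
  refine Finset.sum_congr rfl fun b _ => ?_
  simp only [mul_ite, mul_one, mul_zero, ite_mul, zero_mul]
  rw [Finset.sum_ite_eq]
  simp

lemma opNorm_embedAt_le {n N : ℕ} (k : Fin N) (A : Matrix (Fin n) (Fin n) ℂ) :
    opNorm (embedAt k A) ≤ opNorm A := by
  classical
  refine opNorm_le_of_sq _ _ (norm_nonneg _) fun v => ?_
  set e := Equiv.funSplitAt k (Fin n) with he
  calc ∑ x, ‖(embedAt k A).mulVec v x‖^2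
      = ∑ p : Fin n × ({j : Fin N // j ≠ k} → Fin n), ‖(embedAt k A).mulVec v (e.symm p)‖^2 := by
        rw [Equiv.sum_comp e.symm (fun x => ‖(embedAt k A).mulVec v x‖^2)]
    _ = ∑ r : {j : Fin N // j ≠ k} → Fin n, ∑ a, ‖A.mulVec (fun c => v (e.symm (c, r))) a‖^2 := by
        rw [Fintype.sum_prod_type, Finset.sum_comm]
        refine Finset.sum_congr rfl fun r _ => Finset.sum_congr rfl fun a _ => ?_
        rw [embed_mulVec_split]
        rfl
    _ ≤ ∑ r : {j : Fin N // j ≠ k} → Fin n, (opNorm A)^2 * ∑ c, ‖v (e.symm (c, r))‖^2 :=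
        Finset.sum_le_sum fun r _ => sq_mulVec_le A _
    _ = (opNorm A)^2 * ∑ x, ‖v x‖^2 := by
        rw [← Finset.mul_sum]
        congr 1
        rw [← Equiv.sum_comp e.symm (fun x => ‖v x‖^2), Fintype.sum_prod_type, Finset.sum_comm]

lemma opNorm_T_le {n N : ℕ} (hN : 0 < N) (A : Matrix (Fin n) (Fin n) ℂ) :
    opNorm (T n N A) ≤ opNorm A := by
  have hmap : Matrix.toEuclideanCLM (𝕜 := ℂ) (T n N A)
      = ((N:ℂ))⁻¹ • ∑ k : Fin N, Matrix.toEuclideanCLM (𝕜 := ℂ) (embedAt k A) := by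
    rw [T, map_smul, map_sum]
  rw [opNorm, hmap]
  have hns : ‖((N:ℂ))⁻¹ • ∑ k : Fin N, Matrix.toEuclideanCLM (𝕜 := ℂ) (embedAt k A)‖
      = ‖((N:ℂ))⁻¹‖ * ‖∑ k : Fin N, Matrix.toEuclideanCLM (𝕜 := ℂ) (embedAt k A)‖ :=
    norm_smul ((N:ℂ))⁻¹ (∑ k : Fin N, Matrix.toEuclideanCLM (𝕜 := ℂ) (embedAt k A))
  rw [hns]
  have h1 : ‖((N:ℂ))⁻¹‖ = (N:ℝ)⁻¹ := by simp
  rw [h1]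
  have h2 : ‖∑ k : Fin N, Matrix.toEuclideanCLM (𝕜 := ℂ) (embedAt k A)‖ ≤ N * opNorm A := by
    refine le_trans (norm_sum_le _ _) ?_
    calc ∑ k : Fin N, ‖Matrix.toEuclideanCLM (𝕜 := ℂ) (embedAt k A)‖
        ≤ ∑ _k : Fin N, opNorm A := Finset.sum_le_sum fun k _ => opNorm_embedAt_le k A
      _ = N * opNorm A := by simp [Finset.sum_const, nsmul_eq_mul]
  calc (N:ℝ)⁻¹ * ‖∑ k : Fin N, Matrix.toEuclideanCLM (𝕜 := ℂ) (embedAt k A)‖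
      ≤ (N:ℝ)⁻¹ * (N * opNorm A) := by
        apply mul_le_mul_of_nonneg_left h2 (by positivity)
    _ = opNorm A := by
        rw [← mul_assoc, inv_mul_cancel₀ (by exact_mod_cast hN.ne' : (N:ℝ) ≠ 0), one_mul]

lemma opNorm_zero_of_n_eq_zero {N : ℕ} (A : Matrix (Fin 0) (Fin 0) ℂ) : opNorm A = 0 := by
  haveI : Subsingleton (EuclideanSpace ℂ (Fin 0)) := ⟨fun a b => by ext i; exact i.elim0⟩
  have h : Matrix.toEuclideanCLM (𝕜 := ℂ) A = 0 :=
    ContinuousLinearMap.ext fun V => Subsingleton.elim _ _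
  rw [opNorm, h, norm_zero]

open ComplexConjugate in
lemma conj_inner_sum {n : ℕ} (A : Matrix (Fin n) (Fin n) ℂ) (u : Fin n → ℂ) :
    ∑ a, ∑ b, conj (u a) * (Aᴴ a b * u b)
      = conj (∑ a, ∑ b, conj (u a) * (A a b * u b)) := by
  simp only [map_sum, map_mul, Complex.conj_conj]
  rw [Finset.sum_comm]
  refine Finset.sum_congr rfl fun a _ => Finset.sum_congr rfl fun b _ => ?_
  simp only [Matrix.conjTranspose_apply, starRingEnd_apply]
  ring

open ComplexConjugate in
lemma half_opNorm_le {n N : ℕ} (hN : 0 < N) (A : Matrix (Fin n) (Fin n) ℂ) :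
    (1 / 2) * opNorm A ≤ opNorm (T n N A) := by
  classical
  rcases Nat.eq_zero_or_pos n with h0 | hn
  · subst h0
    rw [opNorm_zero_of_n_eq_zero (N := N) A]
    have h0' : (0:ℝ) ≤ opNorm (T 0 N A) := norm_nonneg _
    linarith
  · haveI : Nonempty (Fin n) := ⟨⟨0, hn⟩⟩
    set H : Matrix (Fin n) (Fin n) ℂ := (2⁻¹ : ℂ) • (A + Aᴴ) with hH'
    set K : Matrix (Fin n) (Fin n) ℂ := ((2 * Complex.I)⁻¹ : ℂ) • (A - Aᴴ) with hK'
    have hHsa : IsSelfAdjoint H := by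
      rw [IsSelfAdjoint, hH', star_smul, star_add]
      simp only [Matrix.star_eq_conjTranspose, Matrix.conjTranspose_conjTranspose]
      rw [show star (2⁻¹ : ℂ) = (2⁻¹ : ℂ) by simp, add_comm]
    have hKsa : IsSelfAdjoint K := by
      rw [IsSelfAdjoint, hK', star_smul, star_sub]
      simp only [Matrix.star_eq_conjTranspose, Matrix.conjTranspose_conjTranspose]
      rw [show star ((2 * Complex.I)⁻¹ : ℂ) = -((2 * Complex.I)⁻¹ : ℂ) by
        rw [Complex.star_def, map_inv₀, map_mul, Complex.conj_I]
        simp [mul_neg, inv_neg, map_ofNat]]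
      rw [neg_smul, ← smul_neg, neg_sub]
    -- bound opNorm H and opNorm K by opNorm (T n N A)
    have hbound : ∀ M : Matrix (Fin n) (Fin n) ℂ, IsSelfAdjoint M →
        (∀ u : Fin n → ℂ, (∑ a, conj (u a) * u a = 1) →
          ‖∑ a, ∑ b, conj (u a) * (M a b * u b)‖ ≤ ‖∑ a, ∑ b, conj (u a) * (A a b * u b)‖) →
        opNorm M ≤ opNorm (T n N A) := by
      intro M hsa hcmp
      haveI := hsa.isStarNormal
      obtain ⟨u, z, hu, hz, hznorm⟩ := exists_unit_eigen M ‹_›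
      calc opNorm M = ‖z‖ := hznorm.symm
        _ = ‖∑ a, ∑ b, conj (u a) * (M a b * u b)‖ := by rw [hz]
        _ ≤ ‖∑ a, ∑ b, conj (u a) * (A a b * u b)‖ := hcmp u hu
        _ ≤ opNorm (T n N A) := key_lower hN A u hu
    have hHle : opNorm H ≤ opNorm (T n N A) := by
      refine hbound H hHsa fun u hu => ?_
      set w := ∑ a, ∑ b, conj (u a) * (A a b * u b) with hw
      have hsum : ∑ a, ∑ b, conj (u a) * (H a b * u b) = 2⁻¹ * (w + conj w) := by
        rw [hw, ← conj_inner_sum A u]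
        simp only [hH', Matrix.smul_apply, Matrix.add_apply, smul_eq_mul,
          Finset.mul_sum, ← Finset.sum_add_distrib]
        refine Finset.sum_congr rfl fun a _ => Finset.sum_congr rfl fun b _ => ?_
        ring
      rw [hsum, Complex.add_conj]
      rw [show (2⁻¹ : ℂ) * (((2 * w.re : ℝ)) : ℂ) = (w.re : ℂ) by push_cast; ring]
      rw [Complex.norm_real]
      exact Complex.abs_re_le_norm w
    have hKle : opNorm K ≤ opNorm (T n N A) := by
      refine hbound K hKsa fun u hu => ?_
      set w := ∑ a, ∑ b, conj (u a) * (A a b * u b) with hw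
      have hsum : ∑ a, ∑ b, conj (u a) * (K a b * u b) = (2 * Complex.I)⁻¹ * (w - conj w) := by
        rw [hw, ← conj_inner_sum A u]
        simp only [hK', Matrix.smul_apply, Matrix.sub_apply, smul_eq_mul,
          Finset.mul_sum, ← Finset.sum_sub_distrib]
        refine Finset.sum_congr rfl fun a _ => Finset.sum_congr rfl fun b _ => ?_
        ring
      rw [hsum, Complex.sub_conj]
      rw [show ((2 * Complex.I)⁻¹ : ℂ) * ((((2 * w.im : ℝ)) : ℂ) * Complex.I) = (w.im : ℂ) by
        push_cast
        field_simp [Complex.I_ne_zero]]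
      rw [Complex.norm_real]
      exact Complex.abs_im_le_norm w
    -- A = H + I • K
    have hA : A = H + Complex.I • K := by
      rw [hH', hK', smul_smul]
      rw [show Complex.I * (2 * Complex.I)⁻¹ = (2⁻¹ : ℂ) by
        rw [mul_inv, mul_comm ((2:ℂ))⁻¹ (Complex.I)⁻¹, ← mul_assoc,
          mul_inv_cancel₀ Complex.I_ne_zero, one_mul]]
      ext i j
      simp only [Matrix.add_apply, Matrix.smul_apply, Matrix.sub_apply, smul_eq_mul]
      ring
    have hAle : opNorm A ≤ opNorm H + opNorm K := by
      rw [opNorm, opNorm, opNorm]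
      have hmap : Matrix.toEuclideanCLM (𝕜 := ℂ) A
          = Matrix.toEuclideanCLM (𝕜 := ℂ) H + Complex.I • Matrix.toEuclideanCLM (𝕜 := ℂ) K := by
        rw [hA]
        simp only [map_add, map_smul]
      rw [hmap]
      refine le_trans (norm_add_le _ _) ?_
      have : ‖Complex.I • Matrix.toEuclideanCLM (𝕜 := ℂ) K‖
          = ‖Complex.I‖ * ‖Matrix.toEuclideanCLM (𝕜 := ℂ) K‖ :=
        norm_smul Complex.I (Matrix.toEuclideanCLM (𝕜 := ℂ) K)
      rw [this, Complex.norm_I, one_mul]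
    linarith

lemma opNorm_zero_of_isEmpty {m : Type*} [Fintype m] [DecidableEq m] [IsEmpty m]
    (A : Matrix m m ℂ) : opNorm A = 0 := by
  haveI : Subsingleton (EuclideanSpace ℂ m) := ⟨fun a b => by ext i; exact isEmptyElim i⟩
  have h : Matrix.toEuclideanCLM (𝕜 := ℂ) A = 0 :=
    ContinuousLinearMap.ext fun V => Subsingleton.elim _ _
  rw [opNorm, h, norm_zero]

lemma embedAt_sub {n N : ℕ} (k : Fin N) (A B : Matrix (Fin n) (Fin n) ℂ) :
    embedAt k (A - B) = embedAt k A - embedAt k B := by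
  ext x y
  simp [embedAt, Matrix.sub_apply, sub_mul]

lemma T_sub {n N : ℕ} (A B : Matrix (Fin n) (Fin n) ℂ) :
    T n N (A - B) = T n N A - T n N B := by
  rw [T, T, T, ← smul_sub, ← Finset.sum_sub_distrib]
  congr 1
  exact Finset.sum_congr rfl fun k _ => embedAt_sub k A B

/-- **Norm equivalence for macroscopic observables.**
`(1/2) ‖A‖ ≤ ‖T_N(A)‖ ≤ ‖A‖`, with equality `‖T_N(A)‖ = ‖A‖` when `A` is normal;
in particular `T_N` is injective. -/
theorem stmt_18 (n N : ℕ) (hN : 0 < N) (A : Matrix (Fin n) (Fin n) ℂ) :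
    (1 / 2) * opNorm A ≤ opNorm (T n N A) ∧
    opNorm (T n N A) ≤ opNorm A ∧
    (IsStarNormal A → opNorm (T n N A) = opNorm A) ∧
    Function.Injective (T n N) := by
  refine ⟨half_opNorm_le hN A, opNorm_T_le hN A, ?_, ?_⟩
  · intro hA
    rcases Nat.eq_zero_or_pos n with h0 | hn
    · subst h0
      haveI : IsEmpty (Fin N → Fin 0) := ⟨fun f => (f ⟨0, hN⟩).elim0⟩
      rw [opNorm_zero_of_isEmpty A, opNorm_zero_of_isEmpty (T 0 N A)]
    · haveI : Nonempty (Fin n) := ⟨⟨0, hn⟩⟩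
      obtain ⟨u, z, hu, hz, hznorm⟩ := exists_unit_eigen A hA
      refine le_antisymm (opNorm_T_le hN A) ?_
      calc opNorm A = ‖z‖ := hznorm.symm
        _ = ‖∑ a, ∑ b, (starRingEnd ℂ) (u a) * (A a b * u b)‖ := by rw [hz]
        _ ≤ opNorm (T n N A) := key_lower hN A u hu
  · intro A' B' h
    have h0 : T n N (A' - B') = 0 := by rw [T_sub, h, sub_self]
    have h1 : opNorm (T n N (A' - B')) = 0 := by rw [h0, opNorm, map_zero, norm_zero]
    have h2 := half_opNorm_le hN (A' - B')
    rw [h1] at h2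
    have h3 : opNorm (A' - B') = 0 :=
      le_antisymm (by linarith) (norm_nonneg _)
    have h4 : Matrix.toEuclideanCLM (𝕜 := ℂ) (A' - B') = 0 := by
      rwa [opNorm, norm_eq_zero] at h3
    have h5 : A' - B' = 0 := by
      apply EquivLike.injective (Matrix.toEuclideanCLM (𝕜 := ℂ)
        (n := Fin n))
      rw [h4, map_zero]
    exact sub_eq_zero.mp h5
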